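/- arXiv:2207.06083 — 7 statements merged into one kernel-verified Lean document; each statement's English description precedes it below -/
import Mathlib

section
/- For all 0 ≤ i ≤ j ≤ n, the value Tree[i,j] defined by the dynamic-programming recurrence equals the minimum of Cost(T) over all binary search trees T on the keys k_{i+1},…,k_j with dummy keys d_i,…,d_j. In particular, Tree[0,n] is the minimum overall cost of searching over all binary search trees on the n keys k_1,…,k_n with dummy keys d_0,…,d_n. -/
/-- Binary trees whose leaves carry dummy keys `d_i` (stored as `i`) and whose
internal nodes carry keys `k_{r+1}` (stored as `r`). -/
inductive BST : Type
  | leaf (i : ℕ) : BST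
  | node (r : ℕ) (L R : BST) : BST

/-- `IsBST t i j` : `t` is a binary search tree on the keys `k_{i+1}, …, k_j`
with dummy keys `d_i, …, d_j` : `T(i,i)` consists of the single leaf `d_i`, and
for `i < j` a tree in `T(i,j)` has a root carrying key `k_{r+1}` for some
`i ≤ r < j`, a left subtree in `T(i,r)` and a right subtree in `T(r+1,j)`. -/
inductive IsBST : BST → ℕ → ℕ → Prop
  | leaf (i : ℕ) : IsBST (.leaf i) i i
  | node {i r j : ℕ} {L R : BST} (h1 : i ≤ r) (h2 : r < j)
      (hL : IsBST L i r) (hR : IsBST R (r + 1) j) :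
      IsBST (.node r L R) i j

/-- `cost P Q t d` : total search cost of the tree `t` whose root is at depth `d`,
i.e. `Σ depth(k_t)·p_t + Σ depth(d_t)·q_t`: a node at depth `e` carrying the key
`k_{r+1}` contributes `e * P (r+1)`, and a leaf at depth `e` carrying the dummy
key `d_i` contributes `e * Q i`.  The cost of the whole tree is `cost P Q t 1`
(the root has depth 1). -/
noncomputable def cost (P Q : ℕ → ℝ) : BST → ℕ → ℝ
  | .leaf i, d => d * Q i
  | .node r L R, d => d * P (r + 1) + cost P Q L (d + 1) + cost P Q R (d + 1)

/-- The total weight `w(i,j)`. -/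
noncomputable def Wgt (P Q : ℕ → ℝ) (i j : ℕ) : ℝ :=
  (∑ t ∈ Finset.Icc (i + 1) j, P t) + ∑ t ∈ Finset.Icc i j, Q t

lemma Wgt_split (P Q : ℕ → ℝ) {i r j : ℕ} (h1 : i ≤ r) (h2 : r < j) :
    Wgt P Q i j = P (r + 1) + Wgt P Q i r + Wgt P Q (r + 1) j := by
  unfold Wgt
  have hP1 : (∑ t ∈ Finset.Icc (i + 1) j, P t)
      = (∑ t ∈ Finset.Icc (i + 1) r, P t) + ∑ t ∈ Finset.Icc (r + 1) j, P t := by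
    rw [Finset.Icc_add_one_left_eq_Ioc, Finset.Icc_add_one_left_eq_Ioc, Finset.Icc_add_one_left_eq_Ioc]
    exact (Finset.sum_Ioc_consecutive _ h1 (le_of_lt h2)).symm
  have hP2 : (∑ t ∈ Finset.Icc (r + 1) j, P t)
      = P (r + 1) + ∑ t ∈ Finset.Icc (r + 2) j, P t := by
    rw [Finset.Icc_add_one_left_eq_Ioc, show r + 2 = (r+1) + 1 from rfl, Finset.Icc_add_one_left_eq_Ioc,
      ← Finset.sum_Ioc_consecutive _ (Nat.le_succ r) h2, Nat.Ioc_succ_singleton,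
      Finset.sum_singleton]
  have hQ1 : (∑ t ∈ Finset.Icc i j, Q t)
      = (∑ t ∈ Finset.Icc i r, Q t) + ∑ t ∈ Finset.Icc (r + 1) j, Q t := by
    rw [← Finset.Ico_add_one_right_eq_Icc, ← Finset.Ico_add_one_right_eq_Icc, ← Finset.Ico_add_one_right_eq_Icc]
    exact (Finset.sum_Ico_consecutive _ (by omega) (by omega)).symm
  rw [hP1, hP2, hQ1]; ring

lemma cost_succ (P Q : ℕ → ℝ) {t : BST} {i j : ℕ} (h : IsBST t i j) :
    ∀ d : ℕ, cost P Q t (d + 1) = cost P Q t d + Wgt P Q i j := by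
  induction h with
  | leaf i =>
    intro d
    simp [cost, Wgt, Finset.Icc_eq_empty (by omega : ¬ i + 1 ≤ i)]
    push_cast; ring
  | node h1 h2 hL hR ihL ihR =>
    intro d
    rw [Wgt_split P Q h1 h2]
    simp only [cost, ihL, ihR]
    push_cast; ring

/-- For all `0 ≤ i ≤ j ≤ n`, the dynamic-programming value `Tree[i,j]` is the
minimum of `Cost(T)` over all binary search trees `T` on the keys
`k_{i+1}, …, k_j` with dummy keys `d_i, …, d_j`. -/
theorem stmt0 (n : ℕ) (hn : 1 ≤ n) (P Q : ℕ → ℝ)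
    (hP : ∀ t, 1 ≤ t → t ≤ n → 0 ≤ P t) (hQ : ∀ t, t ≤ n → 0 ≤ Q t)
    (w : ℕ → ℕ → ℝ)
    (hw : ∀ i j, i ≤ j → j ≤ n →
      w i j = (∑ t ∈ Finset.Icc (i + 1) j, P t) + ∑ t ∈ Finset.Icc i j, Q t)
    (Tree : ℕ → ℕ → ℝ)
    (hTree0 : ∀ i, i ≤ n → Tree i i = Q i)
    (hTree : ∀ i j (hij : i < j), j ≤ n →
      Tree i j = (Finset.Ico i j).inf' (Finset.nonempty_Ico.mpr hij)
        (fun k => Tree i k + Tree (k + 1) j + w i j)) :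
    ∀ i j, i ≤ j → j ≤ n →
      IsLeast { c : ℝ | ∃ t : BST, IsBST t i j ∧ cost P Q t 1 = c } (Tree i j) := by
  have base : ∀ i, i ≤ n →
      IsLeast { c : ℝ | ∃ t : BST, IsBST t i i ∧ cost P Q t 1 = c } (Tree i i) := by
    intro i hin
    constructor
    · exact ⟨.leaf i, IsBST.leaf i, by simp [cost, hTree0 i hin]⟩
    · rintro c ⟨t, ht, rfl⟩
      cases ht with
      | leaf => simp [cost, hTree0 i hin]
      | node h1 h2 _ _ => omega
  have key : ∀ m : ℕ, ∀ i j, j - i ≤ m → i ≤ j → j ≤ n →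
      IsLeast { c : ℝ | ∃ t : BST, IsBST t i j ∧ cost P Q t 1 = c } (Tree i j) := by
    intro m
    induction m with
    | zero =>
      intro i j hm hij hjn
      obtain rfl : i = j := by omega
      exact base i hjn
    | succ m ih =>
      intro i j hm hij hjn
      rcases eq_or_lt_of_le hij with rfl | hlt
      · exact base i hjn
      have hwW : w i j = Wgt P Q i j := hw i j hij hjn
      rw [hTree i j hlt hjn]
      constructor
      · obtain ⟨k, hk, hkeq⟩ := Finset.exists_mem_eq_inf' (Finset.nonempty_Ico.mpr hlt)
          (fun k => Tree i k + Tree (k + 1) j + w i j)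
        rw [hkeq]
        have hk' := Finset.mem_Ico.mp hk
        obtain ⟨tL, hL, hLc⟩ := (ih i k (by omega) (by omega) (by omega)).1
        obtain ⟨tR, hR, hRc⟩ := (ih (k + 1) j (by omega) (by omega) hjn).1
        refine ⟨.node k tL tR, IsBST.node hk'.1 hk'.2 hL hR, ?_⟩
        simp only [cost]
        rw [cost_succ P Q hL 1, cost_succ P Q hR 1, hLc, hRc, hwW,
          Wgt_split P Q hk'.1 hk'.2]
        push_cast; ring
      · rintro c ⟨t, ht, rfl⟩
        cases ht with
        | leaf => omega
        | node h1 h2 hL hR =>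
          refine le_trans (Finset.inf'_le _ (Finset.mem_Ico.mpr ⟨h1, h2⟩)) ?_
          simp only [cost]
          rw [cost_succ P Q hL 1, cost_succ P Q hR 1, hwW, Wgt_split P Q h1 h2]
          have l1 := (ih i _ (by omega) h1 (by omega)).2 ⟨_, hL, rfl⟩
          have l2 := (ih _ j (by omega) h2 hjn).2 ⟨_, hR, rfl⟩
          push_cast; linarith
  intro i j hij hjn
  exact key (j - i) i j le_rfl hij hjn
end

section
/- For all 0 ≤ i ≤ j ≤ n, the binary search tree reconstructed from the tracking table Cut is optimal: letting Build(i,i) be the single leaf d_i and, for i < j, Build(i,j) be the tree with root key k_{Cut[i,j]+1}, left subtree Build(i,Cut[i,j]) and right subtree Build(Cut[i,j]+1,j), the tree Build(i,j) is a binary search tree on keys k_{i+1},…,k_j with dummy keys d_i,…,d_j and Cost(Build(i,j)) = Tree[i,j]. -/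
/-- The tree reconstructed from the tracking table `Cut` : `Build Cut i i` is the
single leaf `d_i` and, for `i < j`, `Build Cut i j` is the tree with root key
`k_{Cut[i,j]+1}`, left subtree `Build Cut i (Cut i j)` and right subtree
`Build Cut (Cut i j + 1) j`.  (The extra guard `i ≤ Cut i j ∧ Cut i j < j`,
needed for termination, is automatically satisfied by any tracking table of
smallest optimal split points.) -/
def Build (Cut : ℕ → ℕ → ℕ) : ℕ → ℕ → BST
  | i, j =>
    if h : i < j ∧ i ≤ Cut i j ∧ Cut i j < j then
      .node (Cut i j) (Build Cut i (Cut i j)) (Build Cut (Cut i j + 1) j)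
    else .leaf i
  termination_by i j => j - i
  decreasing_by
  · omega
  · omega

/-- For all `0 ≤ i ≤ j ≤ n`, the binary search tree reconstructed from the
tracking table `Cut` (of smallest optimal split points) is optimal:
`Build Cut i j` is a binary search tree on keys `k_{i+1}, …, k_j` with dummy
keys `d_i, …, d_j`, and `Cost(Build Cut i j) = Tree[i,j]`. -/
theorem stmt1 (n : ℕ) (hn : 1 ≤ n) (P Q : ℕ → ℝ)
    (hP : ∀ t, 1 ≤ t → t ≤ n → 0 ≤ P t) (hQ : ∀ t, t ≤ n → 0 ≤ Q t)
    (w : ℕ → ℕ → ℝ)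
    (hw : ∀ i j, i ≤ j → j ≤ n →
      w i j = (∑ t ∈ Finset.Icc (i + 1) j, P t) + ∑ t ∈ Finset.Icc i j, Q t)
    (Tree : ℕ → ℕ → ℝ)
    (hTree0 : ∀ i, i ≤ n → Tree i i = Q i)
    (hTree : ∀ i j (hij : i < j), j ≤ n →
      Tree i j = (Finset.Ico i j).inf' (Finset.nonempty_Ico.mpr hij)
        (fun k => Tree i k + Tree (k + 1) j + w i j))
    (Cut : ℕ → ℕ → ℕ)
    (hCut : ∀ i j, i < j → j ≤ n →
      IsLeast { k : ℕ | i ≤ k ∧ k < j ∧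
        Tree i j = Tree i k + Tree (k + 1) j + w i j } (Cut i j)) :
    ∀ i j, i ≤ j → j ≤ n →
      IsBST (Build Cut i j) i j ∧ cost P Q (Build Cut i j) 1 = Tree i j := by
  have wsplit : ∀ i k j, i ≤ k → k < j → j ≤ n →
      w i j = w i k + w (k + 1) j + P (k + 1) := by
    intro i k j hik hkj hjn
    rw [hw i j (by omega) hjn, hw i k (by omega) (by omega),
      hw (k + 1) j (by omega) hjn]
    have hPs : ∑ t ∈ Finset.Icc (i + 1) j, P t =
        (∑ t ∈ Finset.Icc (i + 1) k, P t) + (P (k + 1) +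
          ∑ t ∈ Finset.Icc (k + 2) j, P t) := by
      rw [← Finset.Ico_add_one_right_eq_Icc (i + 1) j, ← Finset.Ico_add_one_right_eq_Icc (i + 1) k,
        ← Finset.sum_Ico_consecutive _ (by omega : i + 1 ≤ k + 1)
          (by omega : k + 1 ≤ j + 1)]
      congr 1
      rw [Finset.Ico_add_one_right_eq_Icc, Finset.Icc_eq_cons_Ioc (by omega : k + 1 ≤ j),
        Finset.sum_cons, ← Finset.Icc_add_one_left_eq_Ioc]; rfl
    have hQs : ∑ t ∈ Finset.Icc i j, Q t =
        (∑ t ∈ Finset.Icc i k, Q t) + ∑ t ∈ Finset.Icc (k + 1) j, Q t := by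
      rw [← Finset.Ico_add_one_right_eq_Icc i j, ← Finset.Ico_add_one_right_eq_Icc i k,
        ← Finset.Ico_add_one_right_eq_Icc (k + 1) j,
        ← Finset.sum_Ico_consecutive _ (by omega : i ≤ k + 1)
          (by omega : k + 1 ≤ j + 1)]
    rw [hPs, hQs]; ring
  have wii : ∀ i, i ≤ n → w i i = Q i := by
    intro i hi
    rw [hw i i le_rfl hi, Finset.Icc_self, Finset.sum_singleton,
      Finset.Icc_eq_empty (by omega), Finset.sum_empty, zero_add]
  have main : ∀ m i j, j - i ≤ m → i ≤ j → j ≤ n →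
      IsBST (Build Cut i j) i j ∧ cost P Q (Build Cut i j) 1 = Tree i j ∧
      ∀ d, cost P Q (Build Cut i j) (d + 1) = cost P Q (Build Cut i j) d + w i j := by
    intro m
    induction m with
    | zero =>
      intro i j h1 h2 h3
      have hij : i = j := by omega
      subst hij
      rw [Build, dif_neg (by omega)]
      refine ⟨IsBST.leaf i, ?_, ?_⟩
      · simp only [cost, hTree0 i h3]; push_cast; ring
      · intro d; simp only [cost, wii i h3]; push_cast; ring
    | succ m ih =>
      intro i j h1 h2 h3
      rcases eq_or_lt_of_le h2 with rfl | hij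
      · rw [Build, dif_neg (by omega)]
        refine ⟨IsBST.leaf i, ?_, ?_⟩
        · simp only [cost, hTree0 i h3]; push_cast; ring
        · intro d; simp only [cost, wii i h3]; push_cast; ring
      · obtain ⟨⟨hik, hkj, heq⟩, -⟩ := hCut i j hij h3
        obtain ⟨hL1, hL2, hL3⟩ := ih i (Cut i j) (by omega) hik (by omega)
        obtain ⟨hR1, hR2, hR3⟩ := ih (Cut i j + 1) j (by omega) (by omega) h3
        rw [Build, dif_pos ⟨hij, hik, hkj⟩]
        have hws := wsplit i (Cut i j) j hik hkj h3
        refine ⟨IsBST.node hik hkj hL1 hR1, ?_, ?_⟩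
        · simp only [cost]
          rw [hL3 1, hR3 1, hL2, hR2, heq, hws]
          push_cast; ring
        · intro d
          simp only [cost]
          rw [hL3 (d + 1), hR3 (d + 1), hws]
          push_cast; ring
  intro i j hij hjn
  obtain ⟨h1, h2, -⟩ := main (j - i) i j le_rfl hij hjn
  exact ⟨h1, h2⟩
end

section
/- The dynamic-programming table Tree satisfies the quadrangle inequality: for all 0 ≤ i ≤ i' ≤ j ≤ j' ≤ n, Tree[i,j] + Tree[i',j'] ≤ Tree[i',j] + Tree[i,j']. -/
/-- The dynamic-programming table `Tree` satisfies the quadrangle inequality: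
for all `0 ≤ i ≤ i' ≤ j ≤ j' ≤ n`,
`Tree[i,j] + Tree[i',j'] ≤ Tree[i',j] + Tree[i,j']`. -/
theorem stmt3 (n : ℕ) (hn : 1 ≤ n) (P Q : ℕ → ℝ)
    (hP : ∀ t, 1 ≤ t → t ≤ n → 0 ≤ P t) (hQ : ∀ t, t ≤ n → 0 ≤ Q t)
    (w : ℕ → ℕ → ℝ)
    (hw : ∀ i j, i ≤ j → j ≤ n →
      w i j = (∑ t ∈ Finset.Icc (i + 1) j, P t) + ∑ t ∈ Finset.Icc i j, Q t)
    (Tree : ℕ → ℕ → ℝ)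
    (hTree0 : ∀ i, i ≤ n → Tree i i = Q i)
    (hTree : ∀ i j (hij : i < j), j ≤ n →
      Tree i j = (Finset.Ico i j).inf' (Finset.nonempty_Ico.mpr hij)
        (fun k => Tree i k + Tree (k + 1) j + w i j)) :
    ∀ i i' j j', i ≤ i' → i' ≤ j → j ≤ j' → j' ≤ n →
      Tree i j + Tree i' j' ≤ Tree i' j + Tree i j' := by
  -- splitting lemma on the right endpoint
  have hsplitR : ∀ a b c, a ≤ b → b ≤ c → c ≤ n →
      w a c = w a b + ((∑ t ∈ Finset.Ioc b c, P t) + ∑ t ∈ Finset.Ioc b c, Q t) := by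
    intro a b c hab hbc hcn
    rw [hw a c (hab.trans hbc) hcn, hw a b hab (hbc.trans hcn)]
    rw [Finset.Icc_add_one_left_eq_Ioc, Finset.Icc_add_one_left_eq_Ioc, ← Finset.sum_Ioc_consecutive _ hab hbc]
    rw [Finset.Icc_eq_cons_Ioc (hab.trans hbc), Finset.Icc_eq_cons_Ioc hab,
      Finset.sum_cons, Finset.sum_cons, ← Finset.sum_Ioc_consecutive _ hab hbc]
    ring
  -- splitting lemma on the left endpoint
  have hsplitL : ∀ a b c, a ≤ b → b ≤ c → c ≤ n →
      w a c = w b c + ((∑ t ∈ Finset.Ioc a b, P t) + ∑ t ∈ Finset.Ico a b, Q t) := by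
    intro a b c hab hbc hcn
    have hdisj : Disjoint (Finset.Ico a b) (Finset.Icc b c) := by
      rw [Finset.disjoint_left]
      intro x hx hx'
      simp only [Finset.mem_Ico, Finset.mem_Icc] at hx hx'
      omega
    rw [hw a c (hab.trans hbc) hcn, hw b c hbc hcn]
    rw [Finset.Icc_add_one_left_eq_Ioc, Finset.Icc_add_one_left_eq_Ioc, ← Finset.sum_Ioc_consecutive _ hab hbc]
    rw [← Finset.Ico_add_one_right_eq_Icc, ← Finset.Ico_add_one_right_eq_Icc,
      ← Finset.sum_Ico_consecutive _ hab (by omega : b ≤ c + 1)]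
    ring
  -- monotonicity of w
  have hwmono : ∀ i i' j j', i ≤ i' → i' ≤ j → j ≤ j' → j' ≤ n → w i' j ≤ w i j' := by
    intro i i' j j' h1 h2 h3 h4
    have e1 := hsplitL i i' j h1 h2 (h3.trans h4)
    have e2 := hsplitR i j j' (h1.trans h2) h3 h4
    have hA : 0 ≤ (∑ t ∈ Finset.Ioc i i', P t) + ∑ t ∈ Finset.Ico i i', Q t := by
      apply add_nonneg
      · apply Finset.sum_nonneg
        intro t ht
        simp only [Finset.mem_Ioc] at ht
        exact hP t (by omega) (by omega)
      · apply Finset.sum_nonneg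
        intro t ht
        simp only [Finset.mem_Ico] at ht
        exact hQ t (by omega)
    have hB : 0 ≤ (∑ t ∈ Finset.Ioc j j', P t) + ∑ t ∈ Finset.Ioc j j', Q t := by
      apply add_nonneg
      · apply Finset.sum_nonneg
        intro t ht
        simp only [Finset.mem_Ioc] at ht
        exact hP t (by omega) (by omega)
      · apply Finset.sum_nonneg
        intro t ht
        simp only [Finset.mem_Ioc] at ht
        exact hQ t (by omega)
    linarith
  -- quadrangle equality for w
  have hwqi : ∀ i i' j j', i ≤ i' → i' ≤ j → j ≤ j' → j' ≤ n →
      w i j + w i' j' = w i' j + w i j' := by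
    intro i i' j j' h1 h2 h3 h4
    have e1 := hsplitR i j j' (h1.trans h2) h3 h4
    have e2 := hsplitR i' j j' h2 h3 h4
    linarith
  -- optimal split point exists
  have hopt : ∀ a b, a < b → b ≤ n →
      ∃ k, a ≤ k ∧ k < b ∧ Tree a b = Tree a k + Tree (k + 1) b + w a b := by
    intro a b hab hbn
    obtain ⟨k, hk, hk2⟩ := Finset.exists_mem_eq_inf' (Finset.nonempty_Ico.mpr hab)
      (fun k => Tree a k + Tree (k + 1) b + w a b)
    simp only [Finset.mem_Ico] at hk
    exact ⟨k, hk.1, hk.2, by rw [hTree a b hab hbn, hk2]⟩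
  -- upper bound at any split point
  have hub : ∀ a b k, a ≤ k → k < b → b ≤ n →
      Tree a b ≤ Tree a k + Tree (k + 1) b + w a b := by
    intro a b k hak hkb hbn
    rw [hTree a b (hak.trans_lt hkb) hbn]
    exact Finset.inf'_le _ (Finset.mem_Ico.mpr ⟨hak, hkb⟩)
  suffices H : ∀ N i i' j j', j' - i ≤ N → i ≤ i' → i' ≤ j → j ≤ j' → j' ≤ n →
      Tree i j + Tree i' j' ≤ Tree i' j + Tree i j' by
    intro i i' j j' h1 h2 h3 h4
    exact H (j' - i) i i' j j' le_rfl h1 h2 h3 h4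
  intro N
  induction N with
  | zero =>
    intro i i' j j' hN h1 h2 h3 h4
    have : i' = i ∧ j = i ∧ j' = i := by omega
    obtain ⟨rfl, rfl, rfl⟩ := this
    linarith
  | succ N ih =>
    intro i i' j j' hN h1 h2 h3 h4
    rcases eq_or_lt_of_le h1 with rfl | h1'
    · linarith
    rcases eq_or_lt_of_le h3 with rfl | h3'
    · linarith
    rcases eq_or_lt_of_le h2 with rfl | h2'
    · -- triangle case: i < i' = j < j'
      obtain ⟨k, hk1, hk2, hkeq⟩ := hopt i j' (by omega) h4
      by_cases hkj : k < i'
      · have hb := hub i i' k hk1 hkj (by omega)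
        have hih := ih (k + 1) i' i' j' (by omega) (by omega) le_rfl (by omega) h4
        have hw' := hwmono i i i' j' le_rfl (by omega) (by omega) h4
        linarith
      · push_neg at hkj
        have hb := hub i' j' k hkj hk2 h4
        have hih := ih i i' i' k (by omega) (by omega) le_rfl hkj (by omega)
        have hw' := hwmono i i' j' j' h1 (by omega) le_rfl h4
        linarith
    · -- main case: i < i' < j ≤ j' (j < j')
      obtain ⟨k1, hk11, hk12, heq1⟩ := hopt i' j h2' (by omega)
      obtain ⟨k2, hk21, hk22, heq2⟩ := hopt i j' (by omega) h4
      have hwq := hwqi i i' j j' h1 h2 h3 h4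
      by_cases hc : k2 ≤ k1
      · have hb1 := hub i j k2 hk21 (by omega) (by omega)
        have hb2 := hub i' j' k1 hk11 (by omega) h4
        have hih := ih (k2 + 1) (k1 + 1) j j' (by omega) (by omega) (by omega) h3 h4
        linarith
      · push_neg at hc
        have hb1 := hub i j k1 (by omega) hk12 (by omega)
        have hb2 := hub i' j' k2 (by omega) hk22 h4
        have hih := ih i i' k1 k2 (by omega) h1 hk11 (by omega) (by omega)
        linarith
end

section
/- Knuth's monotonicity property holds: the entries of the tracking table Cut satisfy Cut[i,j-1] ≤ Cut[i,j] ≤ Cut[i+1,j] for all 0 ≤ i < j ≤ n (with the convention Cut[i,i] = i). -/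
/-- Knuth's monotonicity property: the entries of the tracking table `Cut`
(smallest optimal split points, with the convention `Cut[i,i] = i`) satisfy
`Cut[i,j-1] ≤ Cut[i,j] ≤ Cut[i+1,j]` for all `0 ≤ i < j ≤ n`. -/
theorem stmt4 (n : ℕ) (hn : 1 ≤ n) (P Q : ℕ → ℝ)
    (hP : ∀ t, 1 ≤ t → t ≤ n → 0 ≤ P t) (hQ : ∀ t, t ≤ n → 0 ≤ Q t)
    (w : ℕ → ℕ → ℝ)
    (hw : ∀ i j, i ≤ j → j ≤ n →
      w i j = (∑ t ∈ Finset.Icc (i + 1) j, P t) + ∑ t ∈ Finset.Icc i j, Q t)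
    (Tree : ℕ → ℕ → ℝ)
    (hTree0 : ∀ i, i ≤ n → Tree i i = Q i)
    (hTree : ∀ i j (hij : i < j), j ≤ n →
      Tree i j = (Finset.Ico i j).inf' (Finset.nonempty_Ico.mpr hij)
        (fun k => Tree i k + Tree (k + 1) j + w i j))
    (Cut : ℕ → ℕ → ℕ)
    (hCut0 : ∀ i, i ≤ n → Cut i i = i)
    (hCut : ∀ i j, i < j → j ≤ n →
      IsLeast { k : ℕ | i ≤ k ∧ k < j ∧
        Tree i j = Tree i k + Tree (k + 1) j + w i j } (Cut i j)) :
    ∀ i j, i < j → j ≤ n →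
      Cut i (j - 1) ≤ Cut i j ∧ Cut i j ≤ Cut (i + 1) j := by
  -- prefix function
  have hwA : ∀ i j, i ≤ j → j ≤ n → w i j =
      ((∑ t ∈ Finset.Ioc 0 j, P t) + ∑ t ∈ Finset.Ioc 0 j, Q t)
      - ((∑ t ∈ Finset.Ioc 0 i, P t) + ∑ t ∈ Finset.Ioc 0 i, Q t) + Q i := by
    intro i j hij hj
    rw [hw i j hij hj]
    have hP' : ∑ t ∈ Finset.Icc (i+1) j, P t = ∑ t ∈ Finset.Ioc i j, P t := by
      rw [Finset.Icc_add_one_left_eq_Ioc]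
    have hQ' : ∑ t ∈ Finset.Icc i j, Q t = Q i + ∑ t ∈ Finset.Ioc i j, Q t := by
      rw [Finset.Icc_eq_cons_Ioc hij, Finset.sum_cons]
    have h1 : (∑ t ∈ Finset.Ioc 0 i, P t) + ∑ t ∈ Finset.Ioc i j, P t
        = ∑ t ∈ Finset.Ioc 0 j, P t :=
      Finset.sum_Ioc_consecutive _ (Nat.zero_le i) hij
    have h2 : (∑ t ∈ Finset.Ioc 0 i, Q t) + ∑ t ∈ Finset.Ioc i j, Q t
        = ∑ t ∈ Finset.Ioc 0 j, Q t :=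
      Finset.sum_Ioc_consecutive _ (Nat.zero_le i) hij
    rw [hP', hQ']
    linarith
  -- quadrangle identity for w
  have wQI : ∀ i i' j j', i ≤ i' → i' ≤ j → j ≤ j' → j' ≤ n →
      w i j + w i' j' = w i' j + w i j' := by
    intro i i' j j' h1 h2 h3 h4
    rw [hwA i j (le_trans h1 h2) (le_trans h3 h4),
        hwA i' j' (le_trans h2 h3) h4,
        hwA i' j h2 (le_trans h3 h4),
        hwA i j' (le_trans (le_trans h1 h2) h3) h4]
    ring
  -- monotonicity of w
  have wMono : ∀ i i' j j', i' ≤ i → i ≤ j → j ≤ j' → j' ≤ n → w i j ≤ w i' j' := by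
    intro i i' j j' h1 h2 h3 h4
    rw [hw i j h2 (le_trans h3 h4), hw i' j' (le_trans h1 (le_trans h2 h3)) h4]
    refine add_le_add ?_ ?_
    · refine Finset.sum_le_sum_of_subset_of_nonneg
        (Finset.Icc_subset_Icc (by omega) h3) ?_
      intro t ht _
      rw [Finset.mem_Icc] at ht
      exact hP t (by omega) (by omega)
    · refine Finset.sum_le_sum_of_subset_of_nonneg
        (Finset.Icc_subset_Icc h1 h3) ?_
      intro t ht _
      rw [Finset.mem_Icc] at ht
      exact hQ t (by omega)
  -- Tree i j is at most the cost of any split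
  have treeLe : ∀ i j k, i ≤ k → k < j → j ≤ n →
      Tree i j ≤ Tree i k + Tree (k + 1) j + w i j := by
    intro i j k hik hkj hj
    rw [hTree i j (lt_of_le_of_lt hik hkj) hj]
    exact Finset.inf'_le _ (Finset.mem_Ico.mpr ⟨hik, hkj⟩)
  -- quadrangle inequality for Tree, by induction on span
  have QI : ∀ m i i' j j', i ≤ i' → i' ≤ j → j ≤ j' → j' ≤ n → j' - i ≤ m →
      Tree i j + Tree i' j' ≤ Tree i' j + Tree i j' := by
    intro m
    induction m with
    | zero =>
      intro i i' j j' h1 h2 h3 h4 h5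
      have e1 : i' = i := by omega
      have e2 : j = i := by omega
      have e3 : j' = i := by omega
      subst e1; subst e2; subst e3; exact le_rfl
    | succ m ih =>
      intro i i' j j' h1 h2 h3 h4 h5
      rcases eq_or_lt_of_le h1 with rfl | hii'
      · linarith
      rcases eq_or_lt_of_le h3 with rfl | hjj'
      · linarith
      rcases eq_or_lt_of_le h2 with rfl | hi'j
      · -- triangle case: i < i' < j', with j = i'
        obtain ⟨hik, hkj', heq⟩ := (hCut i j' (by omega) h4).1
        set k := Cut i j' with hk
        rcases lt_or_ge k i' with hki' | hi'k
        · have t1 := treeLe i i' k hik hki' (by omega)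
          have t2 := ih (k+1) i' i' j' (by omega) le_rfl (by omega) h4 (by omega)
          have t3 : w i i' ≤ w i j' := wMono i i i' j' le_rfl (by omega) (by omega) h4
          linarith
        · have t1 := treeLe i' j' k hi'k hkj' h4
          have t2 := ih i i' i' k h1 le_rfl hi'k (by omega) (by omega)
          have t3 : w i' j' ≤ w i j' := wMono i' i j' j' (by omega) (by omega) le_rfl h4
          have hq := hTree0 i' (by omega)
          linarith
      · -- main case: i < i' < j < j'
        obtain ⟨hik1, hk1j', he1⟩ := (hCut i j' (by omega) h4).1
        obtain ⟨hi'k2, hk2j, he2⟩ := (hCut i' j hi'j (by omega)).1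
        set k1 := Cut i j' with hk1
        set k2 := Cut i' j with hk2
        have hw4 := wQI i i' j j' h1 h2 h3 h4
        rcases le_or_gt k1 k2 with h12 | h21
        · have t1 := treeLe i j k1 hik1 (by omega) (by omega)
          have t2 := treeLe i' j' k2 hi'k2 (by omega) h4
          have tQ := ih (k1+1) (k2+1) j j' (by omega) (by omega) h3 h4 (by omega)
          linarith
        · have t1 := treeLe i j k2 (by omega) hk2j (by omega)
          have t2 := treeLe i' j' k1 (by omega) hk1j' h4
          have tQ := ih i i' k2 k1 h1 hi'k2 (by omega) (by omega) (by omega)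
          linarith
  -- conclusion
  intro i j hij hjn
  obtain ⟨hik, hkj, heq⟩ := (hCut i j hij hjn).1
  constructor
  · -- Cut i (j-1) ≤ Cut i j
    by_cases h : i < j - 1
    · obtain ⟨hic', hc'j1, heq'⟩ := (hCut i (j-1) h (by omega)).1
      by_contra hcon
      push_neg at hcon
      have hne : Tree i (j-1) ≠ Tree i (Cut i j) + Tree (Cut i j + 1) (j-1) + w i (j-1) := by
        intro hE
        have := (hCut i (j-1) h (by omega)).2 ⟨hik, by omega, hE⟩
        omega
      have hlt : Tree i (j-1) < Tree i (Cut i j) + Tree (Cut i j + 1) (j-1) + w i (j-1) :=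
        lt_of_le_of_ne (treeLe i (j-1) (Cut i j) hik (by omega) (by omega)) hne
      have tQ := QI n (Cut i j + 1) (Cut i (j-1) + 1) (j-1) j (by omega) (by omega)
        (by omega) hjn (by omega)
      have tle := treeLe i j (Cut i (j-1)) hic' (by omega) hjn
      linarith
    · have he : j - 1 = i := by omega
      rw [he, hCut0 i (by omega)]
      exact hik
  · -- Cut i j ≤ Cut (i+1) j
    by_cases h : i + 1 < j
    · obtain ⟨hi1c'', hc''j, heq''⟩ := (hCut (i+1) j h hjn).1
      by_contra hcon
      push_neg at hcon
      have hne : Tree i j ≠ Tree i (Cut (i+1) j) + Tree (Cut (i+1) j + 1) j + w i j := by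
        intro hE
        have := (hCut i j hij hjn).2 ⟨by omega, hc''j, hE⟩
        omega
      have hlt : Tree i j < Tree i (Cut (i+1) j) + Tree (Cut (i+1) j + 1) j + w i j :=
        lt_of_le_of_ne (treeLe i j (Cut (i+1) j) (by omega) hc''j hjn) hne
      have tle := treeLe (i+1) j (Cut i j) (by omega) hkj hjn
      have tQ := QI n i (i+1) (Cut (i+1) j) (Cut i j) (by omega) (by omega)
        (by omega) (by omega) (by omega)
      linarith
    · have he : i + 1 = j := by omega
      rw [he, hCut0 j hjn]
      omega
end

section
/- The amortized work bound underlying Knuth's O(n²) algorithm: let Cut be any integer table with Cut[i,i] = i, i ≤ Cut[i,j] < j for 0 ≤ i < j ≤ n, satisfying the monotonicity Cut[i,j-1] ≤ Cut[i,j] ≤ Cut[i+1,j] for all 0 ≤ i < j ≤ n. Then for every diagonal index d with 2 ≤ d ≤ n, Σ_{i=0}^{n-d} ( Cut[i+1,i+d] − Cut[i,i+d-1] + 1 ) ≤ 2n. -/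
/-- The amortized work bound underlying Knuth's `O(n²)` algorithm: if `Cut` is
any integer table with `Cut[i,i] = i`, `i ≤ Cut[i,j] < j` for `0 ≤ i < j ≤ n`,
satisfying the monotonicity `Cut[i,j-1] ≤ Cut[i,j] ≤ Cut[i+1,j]` for all
`0 ≤ i < j ≤ n`, then for every diagonal index `d` with `2 ≤ d ≤ n`,
`Σ_{i=0}^{n-d} ( Cut[i+1,i+d] − Cut[i,i+d-1] + 1 ) ≤ 2n`. -/
theorem stmt6 (n : ℕ) (hn : 2 ≤ n) (Cut : ℕ → ℕ → ℤ)
    (hdiag : ∀ i, i ≤ n → Cut i i = i)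
    (hrange : ∀ i j, i < j → j ≤ n → (i : ℤ) ≤ Cut i j ∧ Cut i j < j)
    (hmono : ∀ i j, i < j → j ≤ n →
      Cut i (j - 1) ≤ Cut i j ∧ Cut i j ≤ Cut (i + 1) j) :
    ∀ d, 2 ≤ d → d ≤ n →
      (∑ i ∈ Finset.range (n - d + 1),
        (Cut (i + 1) (i + d) - Cut i (i + d - 1) + 1)) ≤ 2 * (n : ℤ) := by
  intro d hd2 hdn
  set f : ℕ → ℤ := fun i => Cut i (i + d - 1) with hf
  have hterm : ∀ i, Cut (i + 1) (i + d) - Cut i (i + d - 1) + 1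
      = (f (i + 1) - f i) + 1 := by
    intro i
    have : i + 1 + d - 1 = i + d := by omega
    simp [hf, this]
  rw [Finset.sum_congr rfl (fun i _ => hterm i), Finset.sum_add_distrib,
    Finset.sum_range_sub f]
  simp only [Finset.sum_const, Finset.card_range, nsmul_eq_mul, mul_one]
  have h1 : f (n - d + 1) ≤ (n : ℤ) - 1 := by
    have heq : n - d + 1 + d - 1 = n := by omega
    have := (hrange (n - d + 1) n (by omega) le_rfl).2
    show Cut (n - d + 1) (n - d + 1 + d - 1) ≤ (n : ℤ) - 1; rw [heq]
    omega
  have h2 : (0 : ℤ) ≤ f 0 := by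
    have := (hrange 0 (0 + d - 1) (by omega) (by omega)).1
    simpa [hf] using this
  have h3 : ((n - d + 1 : ℕ) : ℤ) ≤ (n : ℤ) := by
    have : n - d + 1 ≤ n := by omega
    exact_mod_cast this
  omega
end

section
/- In the dynamic graph D_n, the shortest-path value from the source to any vertex equals the corresponding dynamic-programming value: for all 0 ≤ i ≤ j ≤ n, SP(i,j) = Tree[i,j], where SP(i,j) is the minimum total weight over all directed paths in D_n from (−1,−1) to (i,j). -/
/-- The weighted edges of the dynamic graph `D_n`.  Vertices live in `ℤ × ℤ`
(the source is `(-1,-1)`; all other vertices `(i,j)` have `0 ≤ i ≤ j ≤ n`).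
`Edge n Q w T u v c` means there is an edge from `u` to `v` of weight `c`. -/
inductive Edge (n : ℕ) (Q : ℕ → ℝ) (w T : ℕ → ℕ → ℝ) : ℤ × ℤ → ℤ × ℤ → ℝ → Prop
  | init (i : ℕ) (h : i ≤ n) :
      Edge n Q w T (-1, -1) ((i : ℤ), (i : ℤ)) (Q i)
  | horiz (i j : ℕ) (h1 : i ≤ j) (h2 : j < n) :
      Edge n Q w T ((i : ℤ), (j : ℤ)) ((i : ℤ), ((j + 1 : ℕ) : ℤ))
        (Q (j + 1) + w i (j + 1))
  | vert (i j : ℕ) (h0 : 0 < i) (h1 : i ≤ j) (h2 : j ≤ n) :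
      Edge n Q w T ((i : ℤ), (j : ℤ)) (((i - 1 : ℕ) : ℤ), (j : ℤ))
        (Q (i - 1) + w (i - 1) j)
  | hjump (i k j : ℕ) (h1 : i < k) (h2 : k < j) (h3 : j ≤ n) :
      Edge n Q w T ((i : ℤ), (k : ℤ)) ((i : ℤ), (j : ℤ)) (T (k + 1) j + w i j)
  | vjump (i k j : ℕ) (h1 : i ≤ k) (h2 : k + 1 < j) (h3 : j ≤ n) :
      Edge n Q w T (((k + 1 : ℕ) : ℤ), (j : ℤ)) ((i : ℤ), (j : ℤ)) (T i k + w i j)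

/-- `Walk E u v c` : there is a directed path (a finite sequence of consecutive
edges) from `u` to `v` of total weight `c` in the graph whose weighted edge
relation is `E`. -/
inductive Walk {α : Type*} (E : α → α → ℝ → Prop) : α → α → ℝ → Prop
  | nil (a : α) : Walk E a a 0
  | cons {a b d : α} {c c' : ℝ} (h : E a b c) (hw : Walk E b d c') :
      Walk E a d (c + c')

lemma Walk.snoc {α : Type*} {E : α → α → ℝ → Prop} {a b : α} {c : ℝ}
    (hwk : Walk E a b c) : ∀ {d : α} {c' : ℝ}, E b d c' → Walk E a d (c + c') := by
  induction hwk with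
  | nil x => intro d c' h; simpa using Walk.cons h (Walk.nil _)
  | cons h1 _ ih =>
      intro d c' h
      rw [add_assoc]
      exact Walk.cons h1 (ih h)

lemma walk_le {α : Type*} {E : α → α → ℝ → Prop} (φ : α → ℝ)
    (hE : ∀ u v c, E u v c → φ v ≤ φ u + c) :
    ∀ {u v : α} {c : ℝ}, Walk E u v c → φ v ≤ φ u + c := by
  intro u v c hw
  induction hw with
  | nil a => simp
  | cons h hw ih => have := hE _ _ _ h; linarith

lemma exists_walk (n : ℕ) (Q : ℕ → ℝ) (w Tree : ℕ → ℕ → ℝ)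
    (hTree0 : ∀ i, i ≤ n → Tree i i = Q i)
    (hTree : ∀ i j (hij : i < j), j ≤ n →
      Tree i j = (Finset.Ico i j).inf' (Finset.nonempty_Ico.mpr hij)
        (fun k => Tree i k + Tree (k + 1) j + w i j)) :
    ∀ d i j, j - i ≤ d → i ≤ j → j ≤ n →
      Walk (Edge n Q w Tree) (-1, -1) ((i : ℤ), (j : ℤ)) (Tree i j) := by
  intro d
  induction d with
  | zero =>
    intro i j hd hij hjn
    have : i = j := by omega
    subst this
    rw [hTree0 i hjn]
    have h1 := Walk.cons (Edge.init (n := n) (Q := Q) (w := w) (T := Tree) i hjn)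
      (Walk.nil _)
    rw [add_zero] at h1
    exact h1
  | succ d ih =>
    intro i j hd hij hjn
    rcases eq_or_lt_of_le hij with heq | hlt
    · subst heq
      rw [hTree0 i hjn]
      have h1 := Walk.cons (Edge.init (n := n) (Q := Q) (w := w) (T := Tree) i hjn)
        (Walk.nil _)
      rw [add_zero] at h1
      exact h1
    · obtain ⟨k, hk, hkeq⟩ := Finset.exists_mem_eq_inf' (Finset.nonempty_Ico.mpr hlt)
        (fun k => Tree i k + Tree (k + 1) j + w i j)
      rw [Finset.mem_Ico] at hk
      rw [hTree i j hlt hjn, hkeq]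
      rcases eq_or_lt_of_le hk.1 with hki | hki
      · -- k = i : use vert edge from (i+1, j)
        subst hki
        have hw1 := ih (i + 1) j (by omega) (by omega) hjn
        have he : Edge n Q w Tree (((i + 1 : ℕ) : ℤ), ((j : ℕ) : ℤ))
            (((i : ℕ) : ℤ), ((j : ℕ) : ℤ)) (Q i + w i j) := by
          have := Edge.vert (n := n) (Q := Q) (w := w) (T := Tree) (i + 1) j
            (by omega) (by omega) hjn
          simpa using this
        have h2 := hw1.snoc he
        rw [hTree0 i (by omega)]
        have heq2 : Q i + Tree (i + 1) j + w i j = Tree (i + 1) j + (Q i + w i j) := by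
          ring
        rw [heq2]
        exact h2
      · -- i < k : use hjump edge from (i, k)
        have hw1 := ih i k (by omega) (by omega) (by omega)
        have he := Edge.hjump (n := n) (Q := Q) (w := w) (T := Tree) i k j hki hk.2 hjn
        have h2 := hw1.snoc he
        have heq2 : Tree i k + Tree (k + 1) j + w i j
            = Tree i k + (Tree (k + 1) j + w i j) := by ring
        rw [heq2]
        exact h2

/-- In the dynamic graph `D_n`, the shortest-path value from the source to any
vertex equals the corresponding dynamic-programming value: for all
`0 ≤ i ≤ j ≤ n`, `SP(i,j) = Tree[i,j]`, where `SP(i,j)` is the minimum total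
weight over all directed paths in `D_n` from `(−1,−1)` to `(i,j)`. -/
theorem stmt7 (n : ℕ) (hn : 1 ≤ n) (P Q : ℕ → ℝ)
    (hP : ∀ t, 1 ≤ t → t ≤ n → 0 ≤ P t) (hQ : ∀ t, t ≤ n → 0 ≤ Q t)
    (w : ℕ → ℕ → ℝ)
    (hw : ∀ i j, i ≤ j → j ≤ n →
      w i j = (∑ t ∈ Finset.Icc (i + 1) j, P t) + ∑ t ∈ Finset.Icc i j, Q t)
    (Tree : ℕ → ℕ → ℝ)
    (hTree0 : ∀ i, i ≤ n → Tree i i = Q i)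
    (hTree : ∀ i j (hij : i < j), j ≤ n →
      Tree i j = (Finset.Ico i j).inf' (Finset.nonempty_Ico.mpr hij)
        (fun k => Tree i k + Tree (k + 1) j + w i j)) :
    ∀ i j, i ≤ j → j ≤ n →
      IsLeast { c : ℝ |
          Walk (Edge n Q w Tree) (-1, -1) ((i : ℤ), (j : ℤ)) c }
        (Tree i j) := by
  intro i j hij hjn
  constructor
  · exact exists_walk n Q w Tree hTree0 hTree (j - i) i j le_rfl hij hjn
  · intro c hc
    set φ : ℤ × ℤ → ℝ := fun u => if u.1 = -1 then 0 else Tree u.1.toNat u.2.toNat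
      with hφ
    have hφc : ∀ a b : ℕ, φ ((a : ℤ), (b : ℤ)) = Tree a b := by
      intro a b
      simp only [hφ]
      rw [if_neg (by omega)]
      simp
    have hφs : φ (-1, -1) = 0 := by simp [hφ]
    have hE : ∀ u v c', Edge n Q w Tree u v c' → φ v ≤ φ u + c' := by
      intro u v c' he
      cases he with
      | init a h =>
          rw [hφc a a, hTree0 a h, hφs, zero_add]
      | horiz a b h1 h2 =>
          rw [hφc, hφc, hTree a (b + 1) (by omega) (by omega)]
          refine le_trans (Finset.inf'_le _
            (show b ∈ Finset.Ico a (b + 1) from Finset.mem_Ico.mpr ⟨h1, by omega⟩)) ?_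
          rw [hTree0 (b + 1) (by omega)]
          exact le_of_eq (by ring)
      | vert a b h0 h1 h2 =>
          rw [hφc, hφc, hTree (a - 1) b (by omega) h2]
          refine le_trans (Finset.inf'_le _
            (show a - 1 ∈ Finset.Ico (a - 1) b from Finset.mem_Ico.mpr ⟨le_rfl, by omega⟩)) ?_
          rw [hTree0 (a - 1) (by omega), show a - 1 + 1 = a by omega]
          exact le_of_eq (by ring)
      | hjump a k b h1 h2 h3 =>
          rw [hφc, hφc, hTree a b (by omega) h3]
          refine le_trans (Finset.inf'_le _
            (show k ∈ Finset.Ico a b from Finset.mem_Ico.mpr ⟨by omega, h2⟩)) ?_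
          exact le_of_eq (by ring)
      | vjump a k b h1 h2 h3 =>
          rw [hφc, hφc, hTree a b (by omega) h3]
          refine le_trans (Finset.inf'_le _
            (show k ∈ Finset.Ico a b from Finset.mem_Ico.mpr ⟨h1, by omega⟩)) ?_
          exact le_of_eq (by ring)
    have := walk_le φ hE hc
    rw [hφc, hφs, zero_add] at this
    exact this
end

section
/- The per-diagonal computation cost of the CGM-based parallel algorithm based on the four-splitting technique is O(n²/√p): there exists a constant C > 0 such that for all integers n ≥ 0, p ≥ 1 and k ≥ 1, D(n,p,k) = 3·n²/(4p) + 4(⌊S/2⌋ − 1)·n²/(4p) + Σ_{l=2}^{k} 4(⌈S/2⌉ + 1)·n²/(4^l·p) + (⌈S/2⌉ + 1)·n²/(4^k·p) + (S + β)·n²/(4^k·p) ≤ C·n²/√p, where S = ⌈√(2p)⌉ and β = S mod 2. -/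
/-- `S = S(p) = ⌈√(2p)⌉`. -/
noncomputable def Sval (p : ℕ) : ℕ := ⌈Real.sqrt (2 * p)⌉₊

/-- `β = β(p) = S(p) mod 2`. -/
noncomputable def betaVal (p : ℕ) : ℕ := Sval p % 2

/-- The per-diagonal computation cost
`D(n,p,k) = 3·n²/(4p) + 4(⌊S/2⌋ − 1)·n²/(4p)
  + Σ_{l=2}^{k} 4(⌈S/2⌉ + 1)·n²/(4^l·p) + (⌈S/2⌉ + 1)·n²/(4^k·p)
  + (S + β)·n²/(4^k·p)`,
where `S = ⌈√(2p)⌉` and `β = S mod 2` (note `⌊S/2⌋ = S / 2` and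
`⌈S/2⌉ = (S + 1) / 2` with natural division). -/
noncomputable def Dval (n p k : ℕ) : ℝ :=
  3 * (n : ℝ) ^ 2 / (4 * p)
  + 4 * ((Sval p / 2 : ℕ) - 1 : ℝ) * (n : ℝ) ^ 2 / (4 * p)
  + (∑ l ∈ Finset.Icc 2 k,
      4 * (((Sval p + 1) / 2 : ℕ) + 1 : ℝ) * (n : ℝ) ^ 2 / (4 ^ l * p))
  + (((Sval p + 1) / 2 : ℕ) + 1 : ℝ) * (n : ℝ) ^ 2 / (4 ^ k * p)
  + ((Sval p : ℝ) + (betaVal p : ℝ)) * (n : ℝ) ^ 2 / (4 ^ k * p)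

lemma Sval_ge_two (p : ℕ) (hp : 1 ≤ p) : 2 ≤ Sval p := by
  have h2 : (1 : ℝ) < Real.sqrt (2 * p) := by
    have hs0 : 0 ≤ Real.sqrt (2 * p) := Real.sqrt_nonneg _
    have hsq : Real.sqrt (2 * p) * Real.sqrt (2 * p) = 2 * p :=
      Real.mul_self_sqrt (by positivity)
    have hp1 : (1 : ℝ) ≤ p := by exact_mod_cast hp
    nlinarith
  have : 1 < Sval p := by
    unfold Sval
    rw [Nat.lt_ceil]
    exact_mod_cast h2
  omega

lemma Sval_le (p : ℕ) (hp : 1 ≤ p) : (Sval p : ℝ) ≤ 3 * Real.sqrt p := by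
  have h0 : 0 ≤ Real.sqrt (2 * p) := Real.sqrt_nonneg _
  have h1 : (Sval p : ℝ) < Real.sqrt (2 * p) + 1 := Nat.ceil_lt_add_one h0
  have h2 : Real.sqrt (2 * p) = Real.sqrt 2 * Real.sqrt p := by
    rw [← Real.sqrt_mul (by norm_num)]
  have h3 : Real.sqrt 2 ≤ 2 := by
    nlinarith [Real.sq_sqrt (by norm_num : (0:ℝ) ≤ 2), Real.sqrt_nonneg 2]
  have h4 : (1 : ℝ) ≤ Real.sqrt p := by
    rw [show (1:ℝ) = Real.sqrt 1 by simp]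
    exact Real.sqrt_le_sqrt (by exact_mod_cast hp)
  nlinarith [Real.sqrt_nonneg (p:ℝ)]


set_option maxHeartbeats 1000000 in
/-- The per-diagonal computation cost of the CGM-based parallel algorithm based
on the four-splitting technique is `O(n²/√p)`: there is a constant `C > 0` such
that for all integers `n ≥ 0`, `p ≥ 1` and `k ≥ 1`, `D(n,p,k) ≤ C·n²/√p`. -/
theorem stmt11 :
    ∃ C : ℝ, 0 < C ∧ ∀ n p k : ℕ, 1 ≤ p → 1 ≤ k →
      Dval n p k ≤ C * (n : ℝ) ^ 2 / Real.sqrt p := by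
  refine ⟨100, by norm_num, ?_⟩
  intro n p k hp hk
  set s := Real.sqrt p with hsdef
  have hs1 : 1 ≤ s := by
    rw [hsdef, show (1:ℝ) = Real.sqrt 1 by simp]
    exact Real.sqrt_le_sqrt (by exact_mod_cast hp)
  have hs0 : 0 < s := lt_of_lt_of_le one_pos hs1
  have hpss : (p : ℝ) = s * s := (Real.mul_self_sqrt (by positivity)).symm
  have hS3 : (Sval p : ℝ) ≤ 3 * s := Sval_le p hp
  have hS2 : (2 : ℝ) ≤ (Sval p : ℝ) := by exact_mod_cast Sval_ge_two p hp
  set N := (n : ℝ) ^ 2 with hN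
  have hN0 : 0 ≤ N := sq_nonneg _
  set S := Sval p with hSdef
  have hA : (((S + 1) / 2 : ℕ) + 1 : ℝ) ≤ (S : ℝ) := by
    have h2 : 2 ≤ S := Sval_ge_two p hp
    have : (S + 1) / 2 + 1 ≤ S := by omega
    exact_mod_cast this
  have hA0 : (0 : ℝ) ≤ (((S + 1) / 2 : ℕ) + 1 : ℝ) := by positivity
  have hp0 : (0 : ℝ) < 4 * p := by
    have : (1:ℝ) ≤ p := by exact_mod_cast hp
    linarith
  have h4k : (4 : ℝ) * p ≤ 4 ^ k * p := by
    have : (4:ℝ) = 4 ^ 1 := by norm_num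
    have h4 : (4:ℝ) ≤ 4 ^ k := by
      calc (4:ℝ) = 4 ^ 1 := by norm_num
        _ ≤ 4 ^ k := pow_le_pow_right₀ (by norm_num) hk
    have hpr : (0:ℝ) ≤ p := by positivity
    nlinarith
  have h4k0 : (0 : ℝ) < 4 ^ k * p := lt_of_lt_of_le hp0 h4k
  -- bounds for each term
  have T1 : 3 * N / (4 * p) ≤ 3 * N / s := by
    rw [div_le_div_iff₀ hp0 hs0, hpss]
    nlinarith [mul_nonneg hN0 hs0.le]
  have T2 : 4 * ((S / 2 : ℕ) - 1 : ℝ) * N / (4 * p) ≤ 3 * N / s := by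
    have hfl : ((S / 2 : ℕ) : ℝ) ≤ (S : ℝ) / 2 := by
      have := Nat.cast_div_le (α := ℝ) (m := S) (n := 2)
      simpa using this
    rw [div_le_div_iff₀ hp0 hs0, hpss]
    nlinarith [mul_nonneg hN0 hs0.le, mul_nonneg (mul_nonneg hN0 hs0.le) hs0.le]
  have Tsum : (∑ l ∈ Finset.Icc 2 k,
      4 * (((S + 1) / 2 : ℕ) + 1 : ℝ) * N / (4 ^ l * p))
      ≤ 16 * N / s := by
    have hterm : ∀ l ∈ Finset.Icc 2 k,
        4 * (((S + 1) / 2 : ℕ) + 1 : ℝ) * N / (4 ^ l * p)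
        = (4 * (((S + 1) / 2 : ℕ) + 1 : ℝ) * N / p) * (1/4 : ℝ) ^ l := by
      intro l _
      rw [div_pow, one_pow, div_mul_div_comm, mul_one, mul_comm ((p:ℝ)) ((4:ℝ)^l)]
    rw [Finset.sum_congr rfl hterm, ← Finset.mul_sum]
    have hgs : (∑ l ∈ Finset.Icc 2 k, (1/4 : ℝ) ^ l) ≤ 4/3 := by
      have hsub : Finset.Icc 2 k ⊆ Finset.range (k + 1) := by
        intro x hx
        simp only [Finset.mem_Icc] at hx
        simp only [Finset.mem_range]
        omega
      have h1 : (∑ l ∈ Finset.Icc 2 k, (1/4 : ℝ) ^ l)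
          ≤ ∑ l ∈ Finset.range (k + 1), (1/4 : ℝ) ^ l := by
        apply Finset.sum_le_sum_of_subset_of_nonneg hsub
        intro i _ _
        positivity
      have h2 : (∑ l ∈ Finset.range (k + 1), (1/4 : ℝ) ^ l)
          = ((1/4 : ℝ) ^ (k+1) - 1) / ((1/4 : ℝ) - 1) :=
        geom_sum_eq (by norm_num) _
      have h3 : (0:ℝ) ≤ (1/4 : ℝ) ^ (k+1) := by positivity
      rw [h2] at h1
      calc (∑ l ∈ Finset.Icc 2 k, (1/4 : ℝ) ^ l)
          ≤ ((1/4 : ℝ) ^ (k+1) - 1) / ((1/4 : ℝ) - 1) := h1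
        _ ≤ 4/3 := by
            rw [div_le_iff_of_neg (by norm_num)]
            linarith
    have hfac0 : 0 ≤ 4 * (((S + 1) / 2 : ℕ) + 1 : ℝ) * N / p := by positivity
    calc (4 * (((S + 1) / 2 : ℕ) + 1 : ℝ) * N / p) * (∑ l ∈ Finset.Icc 2 k, (1/4 : ℝ) ^ l)
        ≤ (4 * (((S + 1) / 2 : ℕ) + 1 : ℝ) * N / p) * (4/3) :=
          mul_le_mul_of_nonneg_left hgs hfac0
      _ ≤ 16 * N / s := by
          rw [div_mul_eq_mul_div, div_le_div_iff₀ (by positivity) hs0, hpss]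
          nlinarith [mul_nonneg hN0 hs0.le, mul_le_mul_of_nonneg_right hA hN0,
            mul_nonneg (mul_nonneg hN0 hs0.le) hs0.le]
  have T4 : (((S + 1) / 2 : ℕ) + 1 : ℝ) * N / (4 ^ k * p) ≤ N / s := by
    have h1 : (((S + 1) / 2 : ℕ) + 1 : ℝ) * N / (4 ^ k * p)
        ≤ (((S + 1) / 2 : ℕ) + 1 : ℝ) * N / (4 * p) :=
      div_le_div_of_nonneg_left (by positivity) hp0 h4k
    refine h1.trans ?_
    rw [div_le_div_iff₀ hp0 hs0, hpss]
    have h5 : (((S + 1) / 2 : ℕ) + 1 : ℝ) ≤ 3 * s := hA.trans hS3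
    have h6 := mul_le_mul_of_nonneg_right h5 (mul_nonneg hN0 hs0.le)
    have h7 : (0:ℝ) ≤ N * s := mul_nonneg hN0 hs0.le
    nlinarith [h6, h7]
  have T5 : ((S : ℝ) + (betaVal p : ℝ)) * N / (4 ^ k * p) ≤ N / s := by
    have hb : (betaVal p : ℝ) ≤ 1 := by
      have : betaVal p ≤ 1 := Nat.le_of_lt_succ (Nat.mod_lt _ (by norm_num))
      exact_mod_cast this
    have hb0 : (0:ℝ) ≤ (betaVal p : ℝ) := by positivity
    have h1 : ((S : ℝ) + (betaVal p : ℝ)) * N / (4 ^ k * p)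
        ≤ ((S : ℝ) + (betaVal p : ℝ)) * N / (4 * p) :=
      div_le_div_of_nonneg_left (by positivity) hp0 h4k
    refine h1.trans ?_
    rw [div_le_div_iff₀ hp0 hs0, hpss]
    have h5 : (S : ℝ) + (betaVal p : ℝ) ≤ 4 * s := by linarith
    have h6 := mul_le_mul_of_nonneg_right h5 (mul_nonneg hN0 hs0.le)
    nlinarith [h6]
  have key : Dval n p k ≤ 3 * N / s + 3 * N / s + 16 * N / s + N / s + N / s := by
    unfold Dval
    exact add_le_add (add_le_add (add_le_add (add_le_add T1 T2) Tsum) T4) T5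
  refine key.trans ?_
  have heq : 3 * N / s + 3 * N / s + 16 * N / s + N / s + N / s = 24 * N / s := by
    ring
  rw [heq]
  gcongr
  · linarith
end
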